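/- arXiv:1711.01829 — 3 statements merged into one kernel-verified Lean document; each statement's English description precedes it below -/
import Mathlib

section
/- (Bronstein–Mulders–Weil descent formula) With ð = t·d/dt and the recursively defined operators 𝓛_{n+1,k} (𝓛_{n+1,0}=id, 𝓛_{n+1,1}=ð, 𝓛_{n+1,k+1}=ð𝓛_{n+1,k} − k(n+1−k)t²𝓛_{n+1,k−1}), for all integers 0 ≤ j ≤ n and 0 ≤ k ≤ n we have 𝓛_{n+1,k}{[I_0(t)]^j [K_0(t)]^{n−j}} = Σ_{ℓ=0}^{k} [k!/(ℓ!(k−ℓ)!)]·[j!/(j−ℓ)!]·[(n−j)!/(n−j−k+ℓ)!]·[ðI_0(t)]^ℓ [I_0(t)]^{j−ℓ} [ðK_0(t)]^{k−ℓ} [K_0(t)]^{n−j−k+ℓ}, with the convention 1/m! = 0 for negative integers m. -/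
open MeasureTheory Real

/-- Modified Bessel function of the first kind, order zero. -/
noncomputable def I0 (t : ℝ) : ℝ := (1/π) * ∫ θ in (0:ℝ)..π, Real.exp (t * Real.cos θ)

/-- Modified Bessel function of the second kind, order zero. -/
noncomputable def K0 (t : ℝ) : ℝ := ∫ u in Set.Ioi (0:ℝ), Real.exp (-t * Real.cosh u)

/-- Modified Bessel function of the first kind, order one: `I₁ = I₀'`. -/
noncomputable def I1 (t : ℝ) : ℝ := deriv I0 t

/-- Modified Bessel function of the second kind, order one: `K₁ = -K₀'`. -/
noncomputable def K1 (t : ℝ) : ℝ := -deriv K0 t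

/-- The operator `ð = t·d/dt`. -/
noncomputable def eth (f : ℝ → ℝ) : ℝ → ℝ := fun t => t * deriv f t

/-- The Bronstein–Mulders–Weil operators `𝓛_{n+1,k}` (parametrized here by `n`). -/
noncomputable def BMW (n : ℕ) : ℕ → (ℝ → ℝ) → (ℝ → ℝ)
  | 0, f => f
  | 1, f => eth f
  | (k+2), f => fun t =>
      eth (BMW n (k+1) f) t - (k+1) * (n + 1 - (k+1)) * t^2 * BMW n k f t


lemma I0_pos (t : ℝ) : 0 < I0 t := by
  have h : 0 < ∫ θ in (0:ℝ)..π, Real.exp (t * Real.cos θ) := by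
    apply intervalIntegral.intervalIntegral_pos_of_pos
    · exact (Continuous.intervalIntegrable (by continuity) 0 π)
    · intro x; positivity
    · exact Real.pi_pos
  have := Real.pi_pos
  unfold I0; positivity

lemma I0_diff (t : ℝ) : DifferentiableAt ℝ I0 t := by
  have h : HasDerivAt (fun x : ℝ => ∫ θ in (0:ℝ)..π, Real.exp (x * Real.cos θ))
      (∫ θ in (0:ℝ)..π, Real.exp (t * Real.cos θ) * Real.cos θ) t := by
    have := intervalIntegral.hasDerivAt_integral_of_dominated_loc_of_deriv_le
      (F := fun x θ => Real.exp (x * Real.cos θ))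
      (F' := fun x θ => Real.exp (x * Real.cos θ) * Real.cos θ)
      (a := (0:ℝ)) (b := π) (x₀ := t) (bound := fun _ => Real.exp (|t| + 1))
      (s := Metric.ball t 1) (Metric.ball_mem_nhds t one_pos)
      (Filter.Eventually.of_forall fun x =>
        (Continuous.aestronglyMeasurable (by continuity)))
      (Continuous.intervalIntegrable (by continuity) 0 π)
      (Continuous.aestronglyMeasurable (by continuity))
      ?_ (intervalIntegrable_const (μ := volume)) ?_
    · exact this.2
    · refine Filter.Eventually.of_forall fun θ _ x hx => ?_
      have h1 : |Real.exp (x * Real.cos θ) * Real.cos θ| ≤ Real.exp (x * Real.cos θ) := by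
        rw [abs_mul, abs_of_pos (Real.exp_pos _)]
        nlinarith [abs_cos_le_one θ, Real.exp_pos (x * Real.cos θ), abs_nonneg (Real.cos θ)]
      refine h1.trans (Real.exp_le_exp.2 ?_)
      have hx' : |x - t| < 1 := by simpa [Real.dist_eq] using hx
      have : x * Real.cos θ ≤ |x| := by
        calc x * Real.cos θ ≤ |x * Real.cos θ| := le_abs_self _
        _ = |x| * |Real.cos θ| := abs_mul _ _
        _ ≤ |x| * 1 := by nlinarith [abs_cos_le_one θ, abs_nonneg x]
        _ = |x| := mul_one _
      have : |x| ≤ |t| + 1 := by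
        calc |x| = |t + (x - t)| := by ring_nf
        _ ≤ |t| + |x - t| := abs_add_le _ _
        _ ≤ |t| + 1 := by linarith
      linarith [le_abs_self (x * Real.cos θ), this]
    · refine Filter.Eventually.of_forall fun θ _ x _ => ?_
      simpa using ((hasDerivAt_id x).mul_const (Real.cos θ)).exp
  exact ((h.const_mul (1/π)).differentiableAt : DifferentiableAt ℝ _ t)

lemma u_le_cosh (u : ℝ) (hu : 0 ≤ u) : u ≤ Real.cosh u :=
  le_trans (Real.self_le_sinh_iff.2 hu) (Real.sinh_lt_cosh u).le

lemma K0_integrand_int {t : ℝ} (ht : 0 < t) :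
    IntegrableOn (fun u => Real.exp (-t * Real.cosh u)) (Set.Ioi (0:ℝ)) := by
  refine Integrable.mono (exp_neg_integrableOn_Ioi 0 ht) (Continuous.aestronglyMeasurable (by continuity)).restrict ?_
  filter_upwards [ae_restrict_mem measurableSet_Ioi] with u hu
  rw [Real.norm_eq_abs, Real.norm_eq_abs, abs_of_pos (Real.exp_pos _), abs_of_pos (Real.exp_pos _)]
  apply Real.exp_le_exp.2
  have := u_le_cosh u (le_of_lt hu)
  nlinarith

lemma coshbound {t : ℝ} (ht : 0 < t) (u : ℝ) (hu : 0 < u) :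
    Real.cosh u * Real.exp (-(t/2) * Real.cosh u) ≤ (4/t) * Real.exp (-(t/4) * u) := by
  have h1 : Real.cosh u ≤ (4/t) * Real.exp ((t/4) * Real.cosh u) := by
    have h := Real.add_one_le_exp (t/4 * Real.cosh u)
    have hc := Real.cosh_pos u
    rw [div_mul_eq_mul_div, le_div_iff₀ ht]
    nlinarith [Real.exp_pos (t/4 * Real.cosh u)]
  calc Real.cosh u * Real.exp (-(t/2) * Real.cosh u)
      ≤ (4/t) * Real.exp ((t/4) * Real.cosh u) * Real.exp (-(t/2) * Real.cosh u) := by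
        apply mul_le_mul_of_nonneg_right h1 (Real.exp_pos _).le
    _ = (4/t) * Real.exp (-(t/4) * Real.cosh u) := by
        rw [mul_assoc, ← Real.exp_add]; ring_nf
    _ ≤ (4/t) * Real.exp (-(t/4) * u) := by
        have h4 : 0 < 4/t := by positivity
        have := u_le_cosh u hu.le
        have : -(t/4) * Real.cosh u ≤ -(t/4) * u := by nlinarith
        exact mul_le_mul_of_nonneg_left (Real.exp_le_exp.2 this) h4.le

lemma K0_pos {t : ℝ} (ht : 0 < t) : 0 < K0 t := by
  unfold K0
  rw [MeasureTheory.integral_pos_iff_support_of_nonneg_ae]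
  · have : (Function.support fun u => Real.exp (-t * Real.cosh u)) = Set.univ := by
      ext u; simp [Function.support, (Real.exp_pos _).ne']
    rw [this]
    simp [Measure.restrict_apply]
  · filter_upwards with u using (Real.exp_pos _).le
  · exact K0_integrand_int ht

lemma K0_diff {t : ℝ} (ht : 0 < t) : DifferentiableAt ℝ K0 t := by
  have key := hasDerivAt_integral_of_dominated_loc_of_deriv_le
    (μ := volume.restrict (Set.Ioi (0:ℝ)))
    (F := fun x u => Real.exp (-x * Real.cosh u))
    (F' := fun x u => Real.exp (-x * Real.cosh u) * (-Real.cosh u))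
    (x₀ := t) (s := Metric.ball t (t/2)) (bound := fun u => Real.cosh u * Real.exp (-(t/2) * Real.cosh u))
    (Metric.ball_mem_nhds t (by positivity))
    (Filter.Eventually.of_forall fun x => (Continuous.aestronglyMeasurable (by continuity)).restrict)
    (K0_integrand_int ht)
    (Continuous.aestronglyMeasurable (by continuity)).restrict
    ?_ ?_ ?_
  · exact key.2.differentiableAt
  · filter_upwards [ae_restrict_mem measurableSet_Ioi] with u hu x hx
    have hx' : t/2 < x := by
      have : |x - t| < t/2 := by simpa [Real.dist_eq] using hx
      cases abs_lt.1 this; linarith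
    rw [Real.norm_eq_abs, abs_mul, abs_of_pos (Real.exp_pos _), abs_neg,
      abs_of_pos (Real.cosh_pos u)]
    calc Real.exp (-x * Real.cosh u) * Real.cosh u
        ≤ Real.exp (-(t/2) * Real.cosh u) * Real.cosh u := by
          apply mul_le_mul_of_nonneg_right _ (Real.cosh_pos u).le
          apply Real.exp_le_exp.2
          nlinarith [Real.cosh_pos u]
      _ = Real.cosh u * Real.exp (-(t/2) * Real.cosh u) := mul_comm _ _
  · refine Integrable.mono ((exp_neg_integrableOn_Ioi 0 (by positivity : (0:ℝ) < t/4)).const_mul (4/t))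
      (Continuous.aestronglyMeasurable (by continuity)).restrict ?_
    filter_upwards [ae_restrict_mem measurableSet_Ioi] with u hu
    rw [Real.norm_eq_abs, Real.norm_eq_abs]
    have h1 := coshbound ht u hu
    have h2 : 0 < Real.cosh u * Real.exp (-(t/2) * Real.cosh u) := by positivity
    rw [abs_of_pos h2, abs_of_pos (by positivity)]
    exact h1
  · filter_upwards with u x hx
    have : HasDerivAt (fun x : ℝ => -x * Real.cosh u) (-Real.cosh u) x := by
      simpa using ((hasDerivAt_id x).neg.mul_const (Real.cosh u))
    simpa using this.exp

def Ccn (n j k ℓ : ℕ) : ℕ := k.choose ℓ * j.descFactorial ℓ * (n-j).descFactorial (k-ℓ)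

section StepSum
variable (n j k : ℕ) (t X x Y y : ℝ)

/-- abbreviation for the monomials at level `m` -/
noncomputable def Mon (n j m : ℕ) (X x Y y : ℝ) (ℓ : ℕ) : ℝ :=
  X^ℓ * x^(j-ℓ) * Y^(m-ℓ) * y^(n-j-(m-ℓ))

lemma h1lem (hj : j ≤ n) (ℓ : ℕ) :
    (Ccn n j (k+1) ℓ : ℝ) * ((ℓ:ℝ) * t^2 * x *
        (X^(ℓ-1) * x^(j-ℓ) * Y^(k+1-ℓ) * y^(n-j-(k+1-ℓ))))
      = (ℓ:ℝ) * (Ccn n j (k+1) ℓ : ℝ) * t^2 * Mon n j k X x Y y (ℓ-1) := by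
  match ℓ with
  | 0 => simp
  | m+1 =>
    by_cases hmj : j < m+1
    · have hz0 : j.descFactorial (m+1) = 0 := Nat.descFactorial_of_lt hmj
      have hz : Ccn n j (k+1) (m+1) = 0 := by unfold Ccn; rw [hz0]; simp
      simp [hz]
    · push_neg at hmj
      unfold Mon
      rw [Nat.add_sub_cancel,
        (by omega : j - m = (j - (m+1)) + 1),
        (by omega : n - j - (k - m) = n - j - (k+1-(m+1))),
        (by omega : k - m = k + 1 - (m+1)), pow_succ]
      ring

lemma h2lem (ℓ : ℕ) (hl : ℓ < k+2) :
    (Ccn n j (k+1) ℓ : ℝ) * (((j-ℓ:ℕ):ℝ) * X *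
        (X^ℓ * x^((j-ℓ)-1) * Y^(k+1-ℓ) * y^(n-j-(k+1-ℓ))))
      = ((j-ℓ:ℕ):ℝ) * (Ccn n j (k+1) ℓ : ℝ) * Mon n j (k+2) X x Y y (ℓ+1) := by
  unfold Mon
  rw [(by omega : j - (ℓ+1) = (j-ℓ)-1), (by omega : k+2-(ℓ+1) = k+1-ℓ), pow_succ]
  ring

lemma h3lem (ℓ : ℕ) (hl : ℓ < k+2) :
    (Ccn n j (k+1) ℓ : ℝ) * (((k+1-ℓ:ℕ):ℝ) * t^2 * y *
        (X^ℓ * x^(j-ℓ) * Y^((k+1-ℓ)-1) * y^(n-j-(k+1-ℓ))))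
      = ((k+1-ℓ:ℕ):ℝ) * (Ccn n j (k+1) ℓ : ℝ) * t^2 * Mon n j k X x Y y ℓ := by
  rcases Nat.lt_or_ge ℓ (k+1) with hc | hc
  · by_cases hq : n - j < k+1-ℓ
    · have hz : Ccn n j (k+1) ℓ = 0 := by
        simp [Ccn, Nat.descFactorial_of_lt hq]
      simp [hz]
    · push_neg at hq
      unfold Mon
      rw [(by omega : k - ℓ = (k+1-ℓ)-1), (by omega : n - j - ((k+1-ℓ)-1) = (n-j-(k+1-ℓ)) + 1), pow_succ]
      ring
  · have hz : k+1-ℓ = 0 := by omega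
    simp [hz]

lemma h4lem (ℓ : ℕ) (hl : ℓ < k+2) :
    (Ccn n j (k+1) ℓ : ℝ) * (((n-j-(k+1-ℓ):ℕ):ℝ) * Y *
        (X^ℓ * x^(j-ℓ) * Y^(k+1-ℓ) * y^((n-j-(k+1-ℓ))-1)))
      = ((n-j-(k+1-ℓ):ℕ):ℝ) * (Ccn n j (k+1) ℓ : ℝ) * Mon n j (k+2) X x Y y ℓ := by
  unfold Mon
  rw [(by omega : k+2-ℓ = (k+1-ℓ)+1), pow_succ,
    (by omega : n - j - ((k+1-ℓ)+1) = (n-j-(k+1-ℓ))-1)]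
  ring

end StepSum

noncomputable def Tgt (n j m : ℕ) (X x Y y : ℝ) (ℓ : ℕ) : ℝ :=
  (Ccn n j m ℓ : ℝ) * Mon n j m X x Y y ℓ

noncomputable def T1f (n j k : ℕ) (t X x Y y : ℝ) (ℓ : ℕ) : ℝ :=
  (ℓ:ℝ) * (Ccn n j (k+1) ℓ:ℝ) * t^2 * Mon n j k X x Y y (ℓ-1)
noncomputable def T2f (n j k : ℕ) (X x Y y : ℝ) (ℓ : ℕ) : ℝ :=
  ((j-ℓ:ℕ):ℝ) * (Ccn n j (k+1) ℓ:ℝ) * Mon n j (k+2) X x Y y (ℓ+1)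
noncomputable def T3f (n j k : ℕ) (t X x Y y : ℝ) (ℓ : ℕ) : ℝ :=
  ((k+1-ℓ:ℕ):ℝ) * (Ccn n j (k+1) ℓ:ℝ) * t^2 * Mon n j k X x Y y ℓ
noncomputable def T4f (n j k : ℕ) (X x Y y : ℝ) (ℓ : ℕ) : ℝ :=
  ((n-j-(k+1-ℓ):ℕ):ℝ) * (Ccn n j (k+1) ℓ:ℝ) * Mon n j (k+2) X x Y y ℓ

lemma idA (n j k l : ℕ) (hj : j ≤ n) (hk : k < n) (hl : l ≤ k) :
    (l+1) * Ccn n j (k+1) (l+1) + (k+1-l) * Ccn n j (k+1) l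
      = (k+1) * (n-k) * Ccn n j k l := by
  have h1 : (l+1) * (k+1).choose (l+1) = (k+1) * k.choose l := by
    rw [mul_comm (l+1) _, ← Nat.add_one_mul_choose_eq]
  have h2 : (k+1-l) * (k+1).choose l = (k+1) * k.choose l := by
    rw [← Nat.choose_symm (by omega : l ≤ k+1), (by omega : k+1-l = (k-l)+1),
      mul_comm _ ((k+1).choose ((k-l)+1)), ← Nat.add_one_mul_choose_eq,
      Nat.choose_symm (by omega : l ≤ k)]
  rcases Nat.lt_or_ge j l with hc | hc
  · have z1 : j.descFactorial l = 0 := Nat.descFactorial_of_lt hc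
    have z2 : j.descFactorial (l+1) = 0 := Nat.descFactorial_of_lt (by omega)
    unfold Ccn; rw [z1, z2]; simp
  rcases Nat.lt_or_ge (n-j) (k-l) with hc2 | hc2
  · have z1 : (n-j).descFactorial (k-l) = 0 := Nat.descFactorial_of_lt hc2
    have z2 : (n-j).descFactorial (k+1-l) = 0 := Nat.descFactorial_of_lt (by omega)
    unfold Ccn
    rw [(by omega : (k+1)-(l+1) = k-l), z1, z2]; simp
  have e1 : j.descFactorial (l+1) = (j-l) * j.descFactorial l := Nat.descFactorial_succ j l
  have e2 : (n-j).descFactorial (k+1-l) = ((n-j)-(k-l)) * (n-j).descFactorial (k-l) := by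
    rw [(by omega : k+1-l = (k-l)+1), Nat.descFactorial_succ]
  have e3 : (j-l) + ((n-j)-(k-l)) = n - k := by omega
  unfold Ccn
  rw [(by omega : (k+1)-(l+1) = k-l), e1, e2, ← e3]
  have g1 : (l+1) * ((k+1).choose (l+1) * ((j-l) * j.descFactorial l) * (n-j).descFactorial (k-l))
      = ((l+1) * (k+1).choose (l+1)) * ((j-l) * j.descFactorial l) * (n-j).descFactorial (k-l) := by ring
  have g2 : (k+1-l) * ((k+1).choose l * j.descFactorial l * (((n-j)-(k-l)) * (n-j).descFactorial (k-l)))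
      = ((k+1-l) * (k+1).choose l) * j.descFactorial l * (((n-j)-(k-l)) * (n-j).descFactorial (k-l)) := by ring
  rw [g1, g2, h1, h2]; ring

lemma idB (n j k l : ℕ) (hl : l ≤ k+1) :
    Ccn n j (k+2) (l+1) = (j-l) * Ccn n j (k+1) l + ((n-j)-(k-l)) * Ccn n j (k+1) (l+1) := by
  rcases Nat.lt_or_ge k l with hc | hc
  · have hll : l = k+1 := by omega
    subst hll
    have z : (k+1).choose (k+1+1) = 0 := Nat.choose_eq_zero_of_lt (by omega)
    unfold Ccn
    rw [z, (by omega : k+2-(k+1+1) = 0), (by omega : k+1-(k+1) = 0),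
      Nat.choose_self, Nat.choose_self, Nat.descFactorial_succ]
    simp
  · have e0 : (k+2)-(l+1) = (k-l)+1 := by omega
    have e0' : (k+1)-(l+1) = k-l := by omega
    have e1 : (k+1) - l = (k-l)+1 := by omega
    unfold Ccn
    rw [e0, e0', e1, Nat.choose_succ_succ (k+1) l, Nat.descFactorial_succ j l,
      Nat.descFactorial_succ (n-j) (k-l)]
    ring

lemma idB0 (n j k : ℕ) : Ccn n j (k+2) 0 = ((n-j)-(k+1)) * Ccn n j (k+1) 0 := by
  simp [Ccn, Nat.descFactorial_succ]

lemma Ccn_top (n j k : ℕ) : Ccn n j (k+1) (k+1+1) = 0 := by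
  have z : (k+1).choose (k+1+1) = 0 := Nat.choose_eq_zero_of_lt (by omega)
  unfold Ccn; rw [z]; simp

lemma step_sum (n j k : ℕ) (hj : j ≤ n) (hkn : k + 2 ≤ n) (t X x Y y : ℝ) (ht : t ≠ 0) :
    t * (∑ l ∈ Finset.range (k+2), (Ccn n j (k+1) l : ℝ) *
        (((((l:ℝ) * X^(l-1) * (t*x)) * x^(j-l) + X^l * (((j-l:ℕ):ℝ) * x^((j-l)-1) * (X/t))) * Y^(k+1-l)
          + (X^l * x^(j-l)) * (((k+1-l:ℕ):ℝ) * Y^((k+1-l)-1) * (t*y))) * y^(n-j-(k+1-l))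
          + (X^l * x^(j-l) * Y^(k+1-l)) * (((n-j-(k+1-l):ℕ):ℝ) * y^((n-j-(k+1-l))-1) * (Y/t))))
      - ((k:ℝ)+1) * ((n:ℝ) + 1 - ((k:ℝ)+1)) * t^2 *
        (∑ l ∈ Finset.range (k+1), Tgt n j k X x Y y l)
    = ∑ l ∈ Finset.range (k+3), Tgt n j (k+2) X x Y y l := by
  rw [Finset.mul_sum]
  have hsplit : ∀ l ∈ Finset.range (k+2),
      t * ((Ccn n j (k+1) l : ℝ) *
        (((((l:ℝ) * X^(l-1) * (t*x)) * x^(j-l) + X^l * (((j-l:ℕ):ℝ) * x^((j-l)-1) * (X/t))) * Y^(k+1-l)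
          + (X^l * x^(j-l)) * (((k+1-l:ℕ):ℝ) * Y^((k+1-l)-1) * (t*y))) * y^(n-j-(k+1-l))
          + (X^l * x^(j-l) * Y^(k+1-l)) * (((n-j-(k+1-l):ℕ):ℝ) * y^((n-j-(k+1-l))-1) * (Y/t))))
      = T1f n j k t X x Y y l + T2f n j k X x Y y l + T3f n j k t X x Y y l
          + T4f n j k X x Y y l := by
    intro l hl
    have hl' := Finset.mem_range.1 hl
    have hD : t * (((((l:ℝ) * X^(l-1) * (t*x)) * x^(j-l) + X^l * (((j-l:ℕ):ℝ) * x^((j-l)-1) * (X/t))) * Y^(k+1-l)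
          + (X^l * x^(j-l)) * (((k+1-l:ℕ):ℝ) * Y^((k+1-l)-1) * (t*y))) * y^(n-j-(k+1-l))
          + (X^l * x^(j-l) * Y^(k+1-l)) * (((n-j-(k+1-l):ℕ):ℝ) * y^((n-j-(k+1-l))-1) * (Y/t)))
        = (Ccn n j (k+1) l : ℝ)⁻¹ * 0
        + ((l:ℝ) * t^2 * x * (X^(l-1) * x^(j-l) * Y^(k+1-l) * y^(n-j-(k+1-l))))
        + (((j-l:ℕ):ℝ) * X * (X^l * x^((j-l)-1) * Y^(k+1-l) * y^(n-j-(k+1-l))))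
        + (((k+1-l:ℕ):ℝ) * t^2 * y * (X^l * x^(j-l) * Y^((k+1-l)-1) * y^(n-j-(k+1-l))))
        + (((n-j-(k+1-l):ℕ):ℝ) * Y * (X^l * x^(j-l) * Y^(k+1-l) * y^((n-j-(k+1-l))-1))) := by
      field_simp
      ring
    rw [mul_left_comm, hD, mul_add, mul_add, mul_add, mul_add,
      h1lem n j k t X x Y y hj l, h2lem n j k X x Y y l hl',
      h3lem n j k t X x Y y l hl', h4lem n j k X x Y y l hl']
    unfold T1f T2f T3f T4f
    ring
  rw [Finset.sum_congr rfl hsplit, Finset.sum_add_distrib, Finset.sum_add_distrib,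
    Finset.sum_add_distrib]
  have E1 : ∑ l ∈ Finset.range (k+2), T1f n j k t X x Y y l
      = ∑ l ∈ Finset.range (k+1), T1f n j k t X x Y y (l+1) := by
    rw [Finset.sum_range_succ' (fun l => T1f n j k t X x Y y l) (k+1)]
    have hz : T1f n j k t X x Y y 0 = 0 := by unfold T1f; simp
    rw [hz, add_zero]
  have E3 : ∑ l ∈ Finset.range (k+2), T3f n j k t X x Y y l
      = ∑ l ∈ Finset.range (k+1), T3f n j k t X x Y y l := by
    rw [Finset.sum_range_succ]
    have hz : T3f n j k t X x Y y (k+1) = 0 := by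
      unfold T3f; simp [Nat.sub_self]
    rw [hz, add_zero]
  have E13 : ∑ l ∈ Finset.range (k+1), T1f n j k t X x Y y (l+1)
      + ∑ l ∈ Finset.range (k+1), T3f n j k t X x Y y l
      = ((k:ℝ)+1) * ((n:ℝ) + 1 - ((k:ℝ)+1)) * t^2 *
        (∑ l ∈ Finset.range (k+1), Tgt n j k X x Y y l) := by
    rw [← Finset.sum_add_distrib, Finset.mul_sum]
    refine Finset.sum_congr rfl ?_
    intro l hl
    have hl' := Finset.mem_range.1 hl
    have hid := idA n j k l hj (by omega) (by omega)
    have hidR : ((l:ℝ)+1) * ((Ccn n j (k+1) (l+1) : ℕ):ℝ)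
        + ((k:ℝ)+1-(l:ℝ)) * ((Ccn n j (k+1) l : ℕ):ℝ)
        = ((k:ℝ)+1) * ((n:ℝ)-(k:ℝ)) * ((Ccn n j k l : ℕ):ℝ) := by
      have h := congrArg (fun m : ℕ => (m:ℝ)) hid
      push_cast [Nat.cast_sub (show l ≤ k+1 by omega),
        Nat.cast_sub (show k ≤ n by omega)] at h
      linear_combination h
    unfold T1f T3f Tgt
    rw [Nat.add_sub_cancel]
    push_cast [Nat.cast_sub (show l ≤ k+1 by omega)]
    linear_combination (t^2 * Mon n j k X x Y y l) * hidR
  have hT4z : T4f n j k X x Y y (k+1+1) = 0 := by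
    unfold T4f
    rw [Ccn_top]
    simp
  have E24 : ∑ l ∈ Finset.range (k+2), T2f n j k X x Y y l
      + ∑ l ∈ Finset.range (k+2), T4f n j k X x Y y l
      = ∑ l ∈ Finset.range (k+3), Tgt n j (k+2) X x Y y l := by
    rw [Finset.sum_range_succ' (fun l => T4f n j k X x Y y l) (k+1),
      Finset.sum_range_succ' (fun l => Tgt n j (k+2) X x Y y l) (k+2)]
    have hgrow : ∑ l ∈ Finset.range (k+1), T4f n j k X x Y y (l+1)
        = ∑ l ∈ Finset.range (k+2), T4f n j k X x Y y (l+1) := by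
      rw [Finset.sum_range_succ (fun l => T4f n j k X x Y y (l+1)) (k+1), hT4z, add_zero]
    rw [hgrow]
    have hper : ∀ l ∈ Finset.range (k+2),
        T2f n j k X x Y y l + T4f n j k X x Y y (l+1) = Tgt n j (k+2) X x Y y (l+1) := by
      intro l hl
      have hl' := Finset.mem_range.1 hl
      have hid := idB n j k l (by omega)
      have hidR : ((Ccn n j (k+2) (l+1) : ℕ):ℝ)
          = ((j-l:ℕ):ℝ) * ((Ccn n j (k+1) l : ℕ):ℝ)
          + ((n-j-(k-l):ℕ):ℝ) * ((Ccn n j (k+1) (l+1) : ℕ):ℝ) := by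
        exact_mod_cast hid
      unfold T2f T4f Tgt
      rw [(by omega : k+1-(l+1) = k-l)]
      linear_combination (-(Mon n j (k+2) X x Y y (l+1))) * hidR
    have h0 : T4f n j k X x Y y 0 = Tgt n j (k+2) X x Y y 0 := by
      have hidR : ((Ccn n j (k+2) 0 : ℕ):ℝ)
          = ((n-j-(k+1):ℕ):ℝ) * ((Ccn n j (k+1) 0 : ℕ):ℝ) := by
        exact_mod_cast idB0 n j k
      unfold T4f Tgt
      rw [(by omega : k+1-0 = k+1)]
      linear_combination (-(Mon n j (k+2) X x Y y 0)) * hidR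
    have hmain : ∑ l ∈ Finset.range (k+2), T2f n j k X x Y y l
        + ∑ l ∈ Finset.range (k+2), T4f n j k X x Y y (l+1)
        = ∑ l ∈ Finset.range (k+2), Tgt n j (k+2) X x Y y (l+1) := by
      rw [← Finset.sum_add_distrib]
      exact Finset.sum_congr rfl hper
    linear_combination hmain + h0
  linear_combination E1 + E3 + E13 + E24


theorem key (n j : ℕ) (hj : j ≤ n) (a b A B : ℝ → ℝ)
    (ha : ∀ t : ℝ, 0 < t → HasDerivAt a (A t / t) t)
    (hA : ∀ t : ℝ, 0 < t → HasDerivAt A (t * a t) t)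
    (hb : ∀ t : ℝ, 0 < t → HasDerivAt b (B t / t) t)
    (hB : ∀ t : ℝ, 0 < t → HasDerivAt B (t * b t) t) :
    ∀ k : ℕ, k ≤ n → ∀ t : ℝ, 0 < t →
      BMW n k (fun s => a s ^ j * b s ^ (n-j)) t
        = ∑ l ∈ Finset.range (k+1), Tgt n j k (A t) (a t) (B t) (b t) l := by
  intro k
  induction k using Nat.strong_induction_on with
  | _ k IH =>
  match k with
  | 0 =>
    intro _ t ht
    simp only [BMW]
    rw [Finset.sum_range_one]
    unfold Tgt Mon Ccn
    simp
  | 1 =>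
    intro _ t ht
    simp only [BMW, eth]
    have hd : HasDerivAt (fun s => a s ^ j * b s ^ (n-j))
        (((j:ℝ) * a t^(j-1) * (A t / t)) * b t^(n-j)
          + a t^j * (((n-j:ℕ):ℝ) * b t^((n-j)-1) * (B t / t))) t :=
      ((ha t ht).pow j).mul ((hb t ht).pow (n-j))
    rw [hd.deriv, Finset.sum_range_succ, Finset.sum_range_one]
    unfold Tgt Mon Ccn
    simp only [Nat.choose_self, Nat.choose_zero_right, Nat.descFactorial_zero,
      Nat.descFactorial_one, Nat.sub_self, Nat.sub_zero, pow_zero, Nat.cast_one,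
      one_mul, mul_one, Nat.cast_mul]
    field_simp
    ring
  | (k+2) =>
    intro hk t ht
    have IH1 := IH (k+1) (by omega) (by omega)
    have IH0 := IH k (by omega) (by omega) t ht
    simp only [BMW, eth]
    have hev : deriv (BMW n (k+1) (fun s => a s ^ j * b s ^ (n-j))) t
        = deriv (fun u => ∑ l ∈ Finset.range (k+2), (Ccn n j (k+1) l : ℝ) *
            (A u ^ l * a u ^ (j-l) * B u ^ (k+1-l) * b u ^ (n-j-(k+1-l)))) t := by
      apply Filter.EventuallyEq.deriv_eq
      filter_upwards [Ioi_mem_nhds ht] with s hs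
      rw [IH1 s hs]
      simp only [Tgt, Mon]
    have hS : HasDerivAt (fun u => ∑ l ∈ Finset.range (k+2), (Ccn n j (k+1) l : ℝ) *
            (A u ^ l * a u ^ (j-l) * B u ^ (k+1-l) * b u ^ (n-j-(k+1-l))))
        (∑ l ∈ Finset.range (k+2), (Ccn n j (k+1) l : ℝ) *
          (((((l:ℝ) * A t^(l-1) * (t * a t)) * a t^(j-l) + A t^l * (((j-l:ℕ):ℝ) * a t^((j-l)-1) * (A t / t))) * B t^(k+1-l)
          + (A t^l * a t^(j-l)) * (((k+1-l:ℕ):ℝ) * B t^((k+1-l)-1) * (t * b t))) * b t^(n-j-(k+1-l))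
          + (A t^l * a t^(j-l) * B t^(k+1-l)) * (((n-j-(k+1-l):ℕ):ℝ) * b t^((n-j-(k+1-l))-1) * (B t / t)))) t := by
      apply HasDerivAt.fun_sum
      intro l _
      exact (((((hA t ht).pow l).mul ((ha t ht).pow (j-l))).mul
        ((hB t ht).pow (k+1-l))).mul ((hb t ht).pow (n-j-(k+1-l)))).const_mul _
    rw [hev, hS.deriv, IH0]
    exact step_sum n j k hj (by omega) t (A t) (a t) (B t) (b t) (ne_of_gt ht)

theorem bronstein_mulders_weil_descent (n j : ℕ) (hj : j ≤ n)
    (hI : ∀ t : ℝ, 0 < t → eth (eth I0) t = t^2 * I0 t)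
    (hK : ∀ t : ℝ, 0 < t → eth (eth K0) t = t^2 * K0 t) :
    ∀ k : ℕ, k ≤ n → ∀ t : ℝ, 0 < t →
      BMW n k (fun s => (I0 s)^j * (K0 s)^(n-j)) t
        = ∑ ℓ ∈ Finset.range (k+1),
            ((k.choose ℓ : ℝ) * (j.descFactorial ℓ) * ((n-j).descFactorial (k-ℓ))) *
              (eth I0 t)^ℓ * (I0 t)^(j-ℓ) * (eth K0 t)^(k-ℓ) * (K0 t)^(n-j-(k-ℓ)) := by

  have ha : ∀ t : ℝ, 0 < t → HasDerivAt I0 (eth I0 t / t) t := by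
    intro t ht
    have h := (I0_diff t).hasDerivAt
    have he : eth I0 t / t = deriv I0 t := by
      show t * deriv I0 t / t = deriv I0 t
      exact mul_div_cancel_left₀ _ (ne_of_gt ht)
    rw [he]; exact h
  have hb : ∀ t : ℝ, 0 < t → HasDerivAt K0 (eth K0 t / t) t := by
    intro t ht
    have h := (K0_diff ht).hasDerivAt
    have he : eth K0 t / t = deriv K0 t := by
      show t * deriv K0 t / t = deriv K0 t
      exact mul_div_cancel_left₀ _ (ne_of_gt ht)
    rw [he]; exact h
  have hA : ∀ t : ℝ, 0 < t → HasDerivAt (eth I0) (t * I0 t) t := by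
    intro t ht
    have h2 : t * deriv (eth I0) t = t^2 * I0 t := by
      have h := hI t ht
      rw [show eth (eth I0) t = t * deriv (eth I0) t from rfl] at h
      exact h
    have hd : deriv (eth I0) t = t * I0 t := by
      have h3 : t * deriv (eth I0) t = t * (t * I0 t) := by rw [h2]; ring
      exact mul_left_cancel₀ (ne_of_gt ht) h3
    have hdiff : DifferentiableAt ℝ (eth I0) t := by
      by_contra hcon
      rw [deriv_zero_of_not_differentiableAt hcon] at hd
      nlinarith [I0_pos t]
    have h4 := hdiff.hasDerivAt
    rwa [hd] at h4
  have hB : ∀ t : ℝ, 0 < t → HasDerivAt (eth K0) (t * K0 t) t := by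
    intro t ht
    have h2 : t * deriv (eth K0) t = t^2 * K0 t := by
      have h := hK t ht
      rw [show eth (eth K0) t = t * deriv (eth K0) t from rfl] at h
      exact h
    have hd : deriv (eth K0) t = t * K0 t := by
      have h3 : t * deriv (eth K0) t = t * (t * K0 t) := by rw [h2]; ring
      exact mul_left_cancel₀ (ne_of_gt ht) h3
    have hdiff : DifferentiableAt ℝ (eth K0) t := by
      by_contra hcon
      rw [deriv_zero_of_not_differentiableAt hcon] at hd
      nlinarith [K0_pos ht]
    have h4 := hdiff.hasDerivAt
    rwa [hd] at h4
  intro k hk t ht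
  rw [key n j hj I0 K0 (eth I0) (eth K0) ha hA hb hB k hk t ht]
  refine Finset.sum_congr rfl fun l _ => ?_
  unfold Tgt Mon Ccn
  push_cast
  ring
end

section
/- Define det M_k = det of the k×k matrix with entries (M_k)_{a,b} = ∫_0^∞ [I_0(t)]^a [K_0(t)]^{2k+1−a} t^{2b−1} dt. Then the claimed closed forms det M_k = ∏_{j=1}^k (2j)^{k−j} π^j / √((2j+1)^{2j+1}) and det N_k = (2π^{(k+1)²/2}/Γ((k+1)/2))·∏_{j=1}^{k+1} (2j−1)^{k+1−j}/(2j)^j, with (N_k)_{a,b} = ∫_0^∞ [I_0(t)]^a [K_0(t)]^{2k+2−a} t^{2b−1} dt, are consistent with the recursion det M_{k−1}·det M_k = [k·(Γ(k/2))²·(det N_{k−1})²/(2(2k+1))]·∏_{j=1}^k [(2j)²/((2j)²−1)]^{k−1/2} for all k ≥ 2. That is, substituting the closed forms into both sides of the recursion yields a valid identity of real numbers. -/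
open Real

/-- Closed form for the Broadhurst–Mellit determinant `det M_k`. -/
noncomputable def detM (k : ℕ) : ℝ :=
  ∏ j ∈ Finset.Icc 1 k, ((2*j:ℝ)^(k-j) * π^j / Real.sqrt (((2*j+1:ℕ):ℝ)^(2*j+1)))

/-- Closed form for the Broadhurst–Mellit determinant `det N_k`. -/
noncomputable def detN (k : ℕ) : ℝ :=
  2 * π ^ ((((k+1)^2 : ℕ):ℝ)/2) / Real.Gamma (((k:ℝ)+1)/2) *
    ∏ j ∈ Finset.Icc 1 (k+1), ((2*(j:ℝ)-1)^(k+1-j) / (2*j:ℝ)^j)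

noncomputable def uu (k : ℕ) : ℝ :=
  ∏ j ∈ Finset.Icc 1 k, ((2*(j:ℝ))^(2*(k-j)) * π^(2*j) / (2*(j:ℝ)+1)^(2*j+1))
noncomputable def vv (k : ℕ) : ℝ :=
  ∏ j ∈ Finset.Icc 1 k, ((2*(j:ℝ)-1)^(2*(k-j)) / (2*(j:ℝ))^(2*j))
noncomputable def ww (k : ℕ) : ℝ :=
  ∏ j ∈ Finset.Icc 1 k, ((2*(j:ℝ))^2/((2*(j:ℝ))^2-1))^(2*k-1)
noncomputable def Dk (k : ℕ) : ℝ := ∏ j ∈ Finset.Icc 1 k, (2*(j:ℝ))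
noncomputable def Ok (k : ℕ) : ℝ := ∏ j ∈ Finset.Icc 1 k, (2*(j:ℝ)-1)

lemma Dk_succ (k : ℕ) : Dk (k+1) = Dk k * (2*(k:ℝ)+2) := by
  unfold Dk
  rw [Finset.prod_Icc_succ_top (by omega)]
  push_cast; ring

lemma Ok_succ (k : ℕ) : Ok (k+1) = Ok k * (2*(k:ℝ)+1) := by
  unfold Ok
  rw [Finset.prod_Icc_succ_top (by omega)]
  push_cast; ring

lemma Ok_pos (k : ℕ) : 0 < Ok k := by
  unfold Ok
  apply Finset.prod_pos
  intro j hj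
  simp only [Finset.mem_Icc] at hj
  have : (1:ℝ) ≤ j := by exact_mod_cast hj.1
  linarith

lemma Dk_pos (k : ℕ) : 0 < Dk k := by
  unfold Dk
  apply Finset.prod_pos
  intro j hj
  simp only [Finset.mem_Icc] at hj
  have : (1:ℝ) ≤ j := by exact_mod_cast hj.1
  linarith

lemma Oshift (k : ℕ) : ∏ j ∈ Finset.Icc 1 k, (2*(j:ℝ)+1) = Ok k * (2*(k:ℝ)+1) := by
  induction k with
  | zero => simp [Ok]
  | succ n ih =>
      rw [Finset.prod_Icc_succ_top (by omega), ih, Ok_succ]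

lemma uu_succ (k : ℕ) :
    uu (k+1) = uu k * (Dk k)^2 * π^(2*(k+1)) / (2*(k:ℝ)+3)^(2*k+3) := by
  unfold uu
  rw [Finset.prod_Icc_succ_top (by omega)]
  have h1 : ∀ j ∈ Finset.Icc 1 k,
      (2*(j:ℝ))^(2*(k+1-j)) * π^(2*j) / (2*(j:ℝ)+1)^(2*j+1)
        = ((2*(j:ℝ))^(2*(k-j)) * π^(2*j) / (2*(j:ℝ)+1)^(2*j+1)) * (2*(j:ℝ))^2 := by
    intro j hj
    simp only [Finset.mem_Icc] at hj
    have : 2*(k+1-j) = 2*(k-j) + 2 := by omega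
    rw [this, pow_add]
    ring
  rw [Finset.prod_congr rfl h1, Finset.prod_mul_distrib, Finset.prod_pow]
  have h2 : 2*(k+1-(k+1)) = 0 := by omega
  rw [h2]
  have h3 : ((2:ℝ)*((k+1:ℕ):ℝ)+1) = 2*(k:ℝ)+3 := by push_cast; ring
  rw [h3]
  have h4 : 2*(k+1)+1 = 2*k+3 := by omega
  rw [h4]
  unfold Dk
  ring

lemma vv_succ (k : ℕ) :
    vv (k+1) = vv k * (Ok k)^2 / (2*(k:ℝ)+2)^(2*k+2) := by
  unfold vv
  rw [Finset.prod_Icc_succ_top (by omega)]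
  have h1 : ∀ j ∈ Finset.Icc 1 k,
      (2*(j:ℝ)-1)^(2*(k+1-j)) / (2*(j:ℝ))^(2*j)
        = ((2*(j:ℝ)-1)^(2*(k-j)) / (2*(j:ℝ))^(2*j)) * (2*(j:ℝ)-1)^2 := by
    intro j hj
    simp only [Finset.mem_Icc] at hj
    have : 2*(k+1-j) = 2*(k-j) + 2 := by omega
    rw [this, pow_add]
    ring
  rw [Finset.prod_congr rfl h1, Finset.prod_mul_distrib, Finset.prod_pow]
  have h2 : 2*(k+1-(k+1)) = 0 := by omega
  rw [h2]
  have h3 : ((2:ℝ)*((k+1:ℕ):ℝ)) = 2*(k:ℝ)+2 := by push_cast; ring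
  rw [h3]
  have h4 : 2*(k+1) = 2*k+2 := by omega
  rw [h4]
  unfold Ok
  ring

lemma ww_closed (k : ℕ) :
    ww k = ((Dk k)^2/((Ok k)^2 * (2*(k:ℝ)+1)))^(2*k-1) := by
  unfold ww
  rw [Finset.prod_pow]
  congr 1
  have h1 : ∀ j ∈ Finset.Icc 1 k,
      (2*(j:ℝ))^2/((2*(j:ℝ))^2-1) = (2*(j:ℝ))^2/((2*(j:ℝ)-1) * (2*(j:ℝ)+1)) := by
    intro j hj
    congr 1
    ring
  rw [Finset.prod_congr rfl h1, Finset.prod_div_distrib, Finset.prod_mul_distrib,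
    Oshift, Finset.prod_pow]
  unfold Dk Ok
  ring

lemma core (m : ℕ) : uu m * uu (m+1)
    = 4*((m:ℝ)+1)^2 * π^(2*(m+1)^2) * (vv (m+1))^2 * ww (m+1) / (2*(m:ℝ)+3)^2 := by
  induction m with
  | zero =>
    have e0 : Finset.Icc 1 0 = (∅ : Finset ℕ) := by decide
    simp only [uu, vv, ww, e0, Finset.prod_empty, Finset.Icc_self,
      Finset.prod_singleton, Nat.cast_zero, Nat.cast_one]
    norm_num
    ring
  | succ n ih =>
    have key : uu (n+1) * uu (n+2)
        = (uu n * uu (n+1)) * ((Dk n)^2 * π^(2*(n+1))/(2*(n:ℝ)+3)^(2*n+3))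
            * ((Dk (n+1))^2 * π^(2*(n+2))/(2*((n:ℕ):ℝ)+5)^(2*n+5)) := by
      have h5 : ((2:ℝ)*((n+1:ℕ):ℝ)+3) = 2*(n:ℝ)+5 := by push_cast; ring
      have h6 : 2*(n+1)+3 = 2*n+5 := by omega
      have := uu_succ (n+1)
      rw [h5, h6] at this
      rw [this, uu_succ n]
      ring
    rw [key, ih]
    rw [vv_succ (n+1), ww_closed (n+1), ww_closed (n+2), Dk_succ (n+1), Dk_succ n,
      Ok_succ (n+1)]
    have e1 : 2*(n+1)-1 = 2*n+1 := by omega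
    have e2 : 2*(n+2)-1 = 2*n+3 := by omega
    have e3 : 2*(n+1)+2 = 2*n+4 := by omega
    have e4 : 2*(n+1) = 2*n+2 := by omega
    have e5 : 2*(n+2) = 2*n+4 := by omega
    have c1 : ((n+1:ℕ):ℝ) = (n:ℝ)+1 := by push_cast; ring
    have c2 : ((n+2:ℕ):ℝ) = (n:ℝ)+2 := by push_cast; ring
    rw [e1, e2, e3, e4, e5, c1, c2]
    have c3 : (2*((n:ℝ)+1)+1) = 2*(n:ℝ)+3 := by ring
    have c4 : (2*((n:ℝ)+1)+2) = 2*(n:ℝ)+4 := by ring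
    have c5 : (2*((n:ℝ)+2)+1) = 2*(n:ℝ)+5 := by ring
    have c6 : (2*((n:ℝ)+1)+3) = 2*(n:ℝ)+5 := by ring
    have c7 : (4:ℝ)*((n:ℝ)+1)^2 = (2*(n:ℝ)+2)^2 := by ring
    have c8 : (4:ℝ)*((n:ℝ)+1+1)^2 = (2*(n:ℝ)+4)^2 := by ring
    have hpi : π^(2*(n+1+1)^2) = π^(2*(n+1)^2) * π^(2*n+2) * π^(2*n+4) := by
      rw [← pow_add, ← pow_add]
      congr 1
      ring
    rw [c3, c4, c5, c6, c7, c8, hpi]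
    have hx : Dk n ≠ 0 := ne_of_gt (Dk_pos n)
    have ho : Ok (n+1) ≠ 0 := ne_of_gt (Ok_pos (n+1))
    have hp : π ≠ 0 := Real.pi_ne_zero
    have h2 : (2*(n:ℝ)+2) ≠ 0 := by positivity
    have h3 : (2*(n:ℝ)+3) ≠ 0 := by positivity
    have h4 : (2*(n:ℝ)+4) ≠ 0 := by positivity
    have h5 : (2*(n:ℝ)+5) ≠ 0 := by positivity
    set x := Dk n with hxd
    set o := Ok (n+1) with hod
    set w := vv (n+1) with hwd
    set P := π^(2*(n+1)^2) with hPd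
    have hP : P ≠ 0 := by rw [hPd]; exact pow_ne_zero _ Real.pi_ne_zero
    set b2 := 2*(n:ℝ)+2 with hb2
    set b3 := 2*(n:ℝ)+3 with hb3
    set b4 := 2*(n:ℝ)+4 with hb4
    set b5 := 2*(n:ℝ)+5 with hb5
    clear_value x o w P b2 b3 b4 b5
    clear ih key hxd hod hwd hPd hb2 hb3 hb4 hb5 c1 c2 c3 c4 c5 c6 c7 c8 hpi e1 e2 e3 e4 e5
    simp only [div_pow, mul_pow, ← pow_mul]
    field_simp
    ring

lemma detM_sq (k : ℕ) : detM k ^ 2 = uu k := by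
  unfold detM uu
  rw [← Finset.prod_pow]
  apply Finset.prod_congr rfl
  intro j hj
  rw [div_pow, mul_pow, Real.sq_sqrt (by positivity), ← pow_mul, ← pow_mul,
    Nat.mul_comm (k-j) 2, Nat.mul_comm j 2]
  push_cast
  ring

lemma detM_pos (k : ℕ) : 0 < detM k := by
  unfold detM
  apply Finset.prod_pos
  intro j hj
  simp only [Finset.mem_Icc] at hj
  have h1 : (1:ℝ) ≤ (j:ℝ) := by exact_mod_cast hj.1
  have h2 : (0:ℝ) < ((2*j+1:ℕ):ℝ)^(2*j+1) := by positivity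
  positivity

lemma detN_sq (m : ℕ) :
    detN m ^ 2 = 4 * π^((m+1)^2) / (Real.Gamma (((m:ℝ)+1)/2))^2 * vv (m+1) := by
  unfold detN vv
  rw [mul_pow, div_pow, mul_pow, ← Finset.prod_pow]
  have hpi : (π ^ ((((m+1)^2 : ℕ):ℝ)/2))^2 = π^((m+1)^2) := by
    rw [pow_two, ← Real.rpow_add Real.pi_pos, ← Real.rpow_natCast π ((m+1)^2)]
    congr 1
    ring
  rw [hpi]
  have hprod : ∀ j ∈ Finset.Icc 1 (m+1),
      ((2*(j:ℝ)-1)^(m+1-j) / (2*(j:ℝ))^j)^2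
        = (2*(j:ℝ)-1)^(2*(m+1-j)) / (2*(j:ℝ))^(2*j) := by
    intro j hj
    rw [div_pow, ← pow_mul, ← pow_mul, Nat.mul_comm (m+1-j) 2, Nat.mul_comm j 2]
  rw [Finset.prod_congr rfl hprod]
  norm_num

lemma Qsq (k : ℕ) (hk : 1 ≤ k) :
    (∏ j ∈ Finset.Icc 1 k, ((2*(j:ℝ))^2 / ((2*(j:ℝ))^2 - 1)) ^ ((k:ℝ) - 1/2))^2
      = ww k := by
  unfold ww
  rw [← Finset.prod_pow]
  apply Finset.prod_congr rfl
  intro j hj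
  simp only [Finset.mem_Icc] at hj
  have h1 : (1:ℝ) ≤ (j:ℝ) := by exact_mod_cast hj.1
  have hx : (0:ℝ) < (2*(j:ℝ))^2 / ((2*(j:ℝ))^2 - 1) := by
    apply div_pos (by positivity)
    nlinarith
  rw [pow_two, ← Real.rpow_add hx]
  rw [show ((k:ℝ) - 1/2) + ((k:ℝ) - 1/2) = ((2*k-1 : ℕ):ℝ) by
    have : (1:ℝ) ≤ (k:ℝ) := by exact_mod_cast hk
    push_cast [Nat.cast_sub (by omega : 1 ≤ 2*k)]
    ring]
  rw [Real.rpow_natCast]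

theorem detM_recursion_consistency (k : ℕ) (hk : 2 ≤ k) :
    detM (k-1) * detM k
      = (k:ℝ) * (Real.Gamma ((k:ℝ)/2))^2 * (detN (k-1))^2 / (2 * (2*(k:ℝ)+1)) *
          ∏ j ∈ Finset.Icc 1 k, ((2*(j:ℝ))^2 / ((2*(j:ℝ))^2 - 1)) ^ ((k:ℝ) - 1/2) := by
  obtain ⟨m, rfl⟩ : ∃ m, k = m + 1 := ⟨k-1, by omega⟩
  simp only [Nat.add_sub_cancel]
  have hcast : ((m+1:ℕ):ℝ) = (m:ℝ)+1 := by push_cast; ring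
  rw [hcast]
  have hG : Real.Gamma (((m:ℝ)+1)/2) ≠ 0 :=
    ne_of_gt (Real.Gamma_pos_of_pos (by positivity))
  have hL : 0 ≤ detM m * detM (m+1) :=
    le_of_lt (mul_pos (detM_pos m) (detM_pos (m+1)))
  have hQ : 0 ≤ ∏ j ∈ Finset.Icc 1 (m+1),
      ((2*(j:ℝ))^2 / ((2*(j:ℝ))^2 - 1)) ^ (((m:ℝ)+1) - 1/2) := by
    apply Finset.prod_nonneg
    intro j hj
    simp only [Finset.mem_Icc] at hj
    have h1 : (1:ℝ) ≤ (j:ℝ) := by exact_mod_cast hj.1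
    apply Real.rpow_nonneg
    apply div_nonneg (by positivity)
    nlinarith
  have hR : 0 ≤ ((m:ℝ)+1) * (Real.Gamma (((m:ℝ)+1)/2))^2 * (detN m)^2 / (2 * (2*((m:ℝ)+1)+1)) *
      ∏ j ∈ Finset.Icc 1 (m+1), ((2*(j:ℝ))^2 / ((2*(j:ℝ))^2 - 1)) ^ (((m:ℝ)+1) - 1/2) := by
    apply mul_nonneg _ hQ
    positivity
  have hQsq := Qsq (m+1) (by omega)
  rw [hcast] at hQsq
  have hsq : (detM m * detM (m+1))^2
      = (((m:ℝ)+1) * (Real.Gamma (((m:ℝ)+1)/2))^2 * (detN m)^2 / (2 * (2*((m:ℝ)+1)+1)) *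
          ∏ j ∈ Finset.Icc 1 (m+1), ((2*(j:ℝ))^2 / ((2*(j:ℝ))^2 - 1)) ^ (((m:ℝ)+1) - 1/2))^2 := by
    rw [mul_pow, detM_sq, detM_sq, core m, mul_pow, hQsq, detN_sq m]
    rw [show ww (m+1) = ww (m+1) from rfl]
    field_simp
    ring
  rw [← Real.sqrt_sq hL, ← Real.sqrt_sq hR, hsq]
end

section
/- Define det N_k and det M_k by the product formulas det M_k = ∏_{j=1}^k (2j)^{k−j} π^j / √((2j+1)^{2j+1}) and det N_k = (2π^{(k+1)²/2}/Γ((k+1)/2))·∏_{j=1}^{k+1} (2j−1)^{k+1−j}/(2j)^j. Then for every integer k ≥ 2, det N_{k−1}·det N_k = [(2k+1)/(k+1)]·[(det M_k)²/(k−1)!]·∏_{j=2}^{k+1} [(2j−1)²/((2j−1)²−1)]^k. -/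
open Real

section AuxBM

noncomputable def pA (k : ℕ) : ℝ := ∏ j ∈ Finset.Icc 1 k, (2*(j:ℝ)-1)^(k-j)
noncomputable def pB (k : ℕ) : ℝ := ∏ j ∈ Finset.Icc 1 k, (2*(j:ℝ))^j
noncomputable def pC (k : ℕ) : ℝ := ∏ j ∈ Finset.Icc 1 k, (2*(j:ℝ))^(k-j)
noncomputable def pD (k : ℕ) : ℝ := ∏ j ∈ Finset.Icc 1 k, (((2*j+1:ℕ)):ℝ)^(2*j+1)
noncomputable def pE (k : ℕ) : ℝ := ∏ j ∈ Finset.Icc 1 k, (2*(j:ℝ))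
noncomputable def pO (k : ℕ) : ℝ := ∏ j ∈ Finset.Icc 1 k, (2*(j:ℝ)-1)

lemma pA_succ (k : ℕ) : pA (k+1) = pA k * pO k := by
  unfold pA pO
  rw [Finset.prod_Icc_succ_top (by omega), Nat.sub_self, pow_zero, mul_one,
    ← Finset.prod_mul_distrib]
  refine Finset.prod_congr rfl fun j hj => ?_
  have h : k+1-j = (k-j)+1 := by rw [Finset.mem_Icc] at hj; omega
  rw [h, pow_succ]

lemma pC_succ (k : ℕ) : pC (k+1) = pC k * pE k := by
  unfold pC pE
  rw [Finset.prod_Icc_succ_top (by omega), Nat.sub_self, pow_zero, mul_one,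
    ← Finset.prod_mul_distrib]
  refine Finset.prod_congr rfl fun j hj => ?_
  have h : k+1-j = (k-j)+1 := by rw [Finset.mem_Icc] at hj; omega
  rw [h, pow_succ]

lemma pB_succ (k : ℕ) : pB (k+1) = pB k * 2^(k+1) * ((k:ℝ)+1)^(k+1) := by
  unfold pB
  rw [Finset.prod_Icc_succ_top (by omega), mul_assoc, ← mul_pow]
  push_cast; ring

lemma pD_succ (k : ℕ) : pD (k+1) = pD k * (2*(k:ℝ)+3)^(2*k+3) := by
  unfold pD
  rw [Finset.prod_Icc_succ_top (by omega)]
  push_cast; ring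

lemma pE_succ (k : ℕ) : pE (k+1) = pE k * (2*((k:ℝ)+1)) := by
  unfold pE
  rw [Finset.prod_Icc_succ_top (by omega)]
  push_cast; ring

lemma pO_succ (k : ℕ) : pO (k+1) = pO k * (2*(k:ℝ)+1) := by
  unfold pO
  rw [Finset.prod_Icc_succ_top (by omega)]
  push_cast; ring

lemma icc10 : Finset.Icc 1 0 = (∅ : Finset ℕ) := by decide

lemma pA0 : pA 0 = 1 := by simp [pA, icc10]
lemma pB0 : pB 0 = 1 := by simp [pB, icc10]
lemma pC0 : pC 0 = 1 := by simp [pC, icc10]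
lemma pD0 : pD 0 = 1 := by simp [pD, icc10]
lemma pE0 : pE 0 = 1 := by simp [pE, icc10]
lemma pO0 : pO 0 = 1 := by simp [pO, icc10]

lemma key_s15 (k : ℕ) :
    2^(k+1) * pA k * pA (k+1) * pD k * ((k:ℝ)+1)^(k+1) * (pE k)^(2*k)
      = (2*(k:ℝ)+1) * (pC k)^2 * (pO (k+1))^(2*k) * pB k * pB (k+1) := by
  induction k with
  | zero =>
    rw [pA_succ, pB_succ]
    simp [pA0, pB0, pC0, pD0, pE0, pO0]
  | succ k ih =>
    have hc : ((k:ℝ)+1)^(k+1) * (2*(k:ℝ)+1) ≠ 0 := by positivity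
    apply mul_right_cancel₀ hc
    rw [pA_succ (k+1), pA_succ k, pD_succ, pE_succ, pO_succ (k+1), pO_succ k,
      pB_succ (k+1), pB_succ k, pC_succ]
    rw [pA_succ k, pO_succ k, pB_succ k] at ih
    push_cast
    simp only [mul_pow] at ih ⊢
    linear_combination (2 * pO k * (pO k * (2*(k:ℝ)+1)) * (2*(k:ℝ)+3)^(2*k+3)
      * ((k:ℝ)+2)^(k+2) * (pE k)^2 * 2^(2*k+2) * ((k:ℝ)+1)^(2*k+2) * (2*(k:ℝ)+1)) * ih

lemma pB_pos (k : ℕ) : 0 < pB k := by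
  refine Finset.prod_pos fun j hj => ?_
  have h1 : 1 ≤ j := (Finset.mem_Icc.mp hj).1
  have : (1:ℝ) ≤ (j:ℝ) := by exact_mod_cast h1
  positivity

lemma pD_pos (k : ℕ) : 0 < pD k := by
  refine Finset.prod_pos fun j hj => ?_
  positivity

lemma pE_pos (k : ℕ) : 0 < pE k := by
  refine Finset.prod_pos fun j hj => ?_
  have h1 : 1 ≤ j := (Finset.mem_Icc.mp hj).1
  have : (1:ℝ) ≤ (j:ℝ) := by exact_mod_cast h1
  positivity

lemma pO_pos (k : ℕ) : 0 < pO k := by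
  refine Finset.prod_pos fun j hj => ?_
  have h1 : 1 ≤ j := (Finset.mem_Icc.mp hj).1
  have : (1:ℝ) ≤ (j:ℝ) := by exact_mod_cast h1
  nlinarith

lemma icc21 : Finset.Icc 2 1 = (∅ : Finset ℕ) := by decide

lemma hU (k : ℕ) : ∏ j ∈ Finset.Icc 2 (k+1), (2*(j:ℝ)-1)^2 = (pO (k+1))^2 := by
  induction k with
  | zero => simp [icc21, pO_succ, pO0]
  | succ k ih =>
    rw [Finset.prod_Icc_succ_top (by omega), ih, pO_succ (k+1)]
    push_cast; ring

lemma hV (k : ℕ) : ∏ j ∈ Finset.Icc 2 (k+1), ((2*(j:ℝ)-1)^2 - 1) = (pE k)^2 * ((k:ℝ)+1) := by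
  induction k with
  | zero => simp [icc21, pE0]
  | succ k ih =>
    rw [Finset.prod_Icc_succ_top (by omega), ih, pE_succ]
    push_cast; ring

lemma sum_icc (k : ℕ) : ∑ j ∈ Finset.Icc 1 k, j*2 = k*(k+1) := by
  induction k with
  | zero => simp [icc10]
  | succ k ih => rw [Finset.sum_Icc_succ_top (by omega), ih]; ring


lemma detM_sq_s15 (k : ℕ) : (detM k)^2 = (pC k)^2 * π^(k*(k+1)) / pD k := by
  unfold detM pC pD
  rw [← Finset.prod_pow]
  have hcong : ∀ j ∈ Finset.Icc 1 k,
      ((2*(j:ℝ))^(k-j) * π^j / Real.sqrt ((((2*j+1:ℕ)):ℝ)^(2*j+1)))^2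
        = ((2*(j:ℝ))^(k-j))^2 * π^(j*2) / ((((2*j+1:ℕ)):ℝ)^(2*j+1)) := by
    intro j hj
    rw [div_pow, Real.sq_sqrt (by positivity)]; ring
  rw [Finset.prod_congr rfl hcong, Finset.prod_div_distrib, Finset.prod_mul_distrib,
    Finset.prod_pow, Finset.prod_pow_eq_pow_sum, sum_icc]

lemma detN_eval (m : ℕ) : detN m
    = 2 * π ^ ((((m+1)^2 : ℕ):ℝ)/2) / Real.Gamma (((m:ℝ)+1)/2) * (pA (m+1) / pB (m+1)) := by
  unfold detN pA pB
  rw [Finset.prod_div_distrib]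


lemma hGamma (n : ℕ) :
    Real.Gamma ((((n+1:ℕ):ℝ)+1)/2) * Real.Gamma ((((n+2:ℕ):ℝ)+1)/2)
      = (Nat.factorial (n+1) : ℝ) * ((2:ℝ)^(n+1))⁻¹ * Real.sqrt π := by
  have h := Real.Gamma_mul_Gamma_add_half (((n:ℝ)+2)/2)
  have e1 : (((n+1:ℕ):ℝ)+1)/2 = ((n:ℝ)+2)/2 := by push_cast; ring
  have e2 : (((n+2:ℕ):ℝ)+1)/2 = ((n:ℝ)+2)/2 + 1/2 := by push_cast; ring
  rw [e1, e2, h]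
  rw [show 2 * (((n:ℝ)+2)/2) = ((n+1:ℕ):ℝ) + 1 by push_cast; ring,
    Real.Gamma_nat_eq_factorial]
  congr 1
  rw [show (1:ℝ) - (((n+1:ℕ):ℝ) + 1) = -((n+1:ℕ):ℝ) by push_cast; ring,
    Real.rpow_neg (by norm_num), Real.rpow_natCast]

lemma hPi (n : ℕ) :
    π ^ (((((n+1)+1)^2 : ℕ):ℝ)/2) * π ^ (((((n+2)+1)^2 : ℕ):ℝ)/2)
      = π^((n+2)*(n+3)) * Real.sqrt π := by
  rw [Real.sqrt_eq_rpow, ← Real.rpow_natCast π ((n+2)*(n+3)), ← Real.rpow_add pi_pos,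
    ← Real.rpow_add pi_pos]
  congr 1
  push_cast
  ring

end AuxBM

theorem detN_recursion_consistency (k : ℕ) (hk : 2 ≤ k) :
    detN (k-1) * detN k
      = ((2*(k:ℝ)+1)/((k:ℝ)+1)) * ((detM k)^2 / (Nat.factorial (k-1))) *
          ∏ j ∈ Finset.Icc 2 (k+1), ((2*(j:ℝ)-1)^2 / ((2*(j:ℝ)-1)^2 - 1)) ^ k := by
  obtain ⟨n, rfl⟩ : ∃ n, k = n + 2 := ⟨k - 2, by omega⟩
  have e1 : n + 2 - 1 = n + 1 := rfl
  rw [e1, detN_eval, detN_eval, detM_sq_s15]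
  rw [Finset.prod_pow, Finset.prod_div_distrib, hU (n+2), hV (n+2)]
  have hL : 2 * π ^ (((((n+1)+1)^2 : ℕ):ℝ)/2) / Real.Gamma ((((n+1:ℕ):ℝ)+1)/2) *
        (pA (n+2) / pB (n+2)) *
      (2 * π ^ (((((n+2)+1)^2 : ℕ):ℝ)/2) / Real.Gamma ((((n+2:ℕ):ℝ)+1)/2) *
        (pA (n+3) / pB (n+3)))
      = (4 * (π ^ (((((n+1)+1)^2 : ℕ):ℝ)/2) * π ^ (((((n+2)+1)^2 : ℕ):ℝ)/2))) /
          (Real.Gamma ((((n+1:ℕ):ℝ)+1)/2) * Real.Gamma ((((n+2:ℕ):ℝ)+1)/2)) *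
          (pA (n+2) * pA (n+3) / (pB (n+2) * pB (n+3))) := by
    ring
  rw [hL, hPi, hGamma]
  have hsq : Real.sqrt π ≠ 0 := by positivity
  have hB2 : pB (n+2) ≠ 0 := ne_of_gt (pB_pos _)
  have hB3 : pB (n+3) ≠ 0 := ne_of_gt (pB_pos _)
  have hD : pD (n+2) ≠ 0 := ne_of_gt (pD_pos _)
  have hE : pE (n+2) ≠ 0 := ne_of_gt (pE_pos _)
  have hF : (Nat.factorial (n+1) : ℝ) ≠ 0 := by positivity
  have hk3 : ((n+2:ℕ):ℝ) + 1 ≠ 0 := by positivity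
  have hkey := key_s15 (n+2)
  rw [div_pow, mul_pow]
  push_cast at hkey ⊢
  field_simp
  linear_combination hkey
end
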